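/- Let K ≥ 1, and for k = 1,…,K let a_k > 0, b_k > 0 be constants with exponents α = 2n/(2n+m), β = m/(2n+m) for n, m > 0. Define p_k(λ) = a_k^α·(b_k/λ)^β − a_k for λ > 0. Then λ ↦ Σ_k p_k(λ) is strictly decreasing and continuous on (0,∞) with range (−Σ a_k, ∞); hence for any P_max > 0 there is a unique λ* > 0 with Σ_k p_k(λ*) = P_max, and it satisfies (1/λ*)^β = (P_max + Σ_i a_i)/(Σ_i a_i^α·b_i^β), giving the closed form p_k* = (P_max + Σ_i a_i)·(a_k^α b_k^β)/(Σ_i a_i^α b_i^β) − a_k. -/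

import Mathlib

open Real Finset

theorem stmt_16 (K : ℕ) (hK : 1 ≤ K) (n m : ℝ) (hn : 0 < n) (hm : 0 < m)
    (a b : Fin K → ℝ) (ha : ∀ k, 0 < a k) (hb : ∀ k, 0 < b k) :
    let α : ℝ := 2 * n / (2 * n + m)
    let β : ℝ := m / (2 * n + m)
    let p : Fin K → ℝ → ℝ := fun k lam => a k ^ α * (b k / lam) ^ β - a k
    let S : ℝ → ℝ := fun lam => ∑ k, p k lam
    StrictAntiOn S (Set.Ioi 0) ∧
    ContinuousOn S (Set.Ioi 0) ∧
    S '' Set.Ioi 0 = Set.Ioi (-(∑ k, a k)) ∧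
    ∀ Pmax : ℝ, 0 < Pmax →
      (∃! lam : ℝ, 0 < lam ∧ S lam = Pmax) ∧
      ∀ lam : ℝ, 0 < lam → S lam = Pmax →
        (1 / lam) ^ β = (Pmax + ∑ i, a i) / (∑ i, a i ^ α * b i ^ β) ∧
        ∀ k, p k lam =
          (Pmax + ∑ i, a i) * (a k ^ α * b k ^ β) / (∑ i, a i ^ α * b i ^ β) - a k := by
  intro α β p S
  have hβ : 0 < β := div_pos hm (by linarith)
  set A : ℝ := ∑ k, a k with hA_def
  set C : ℝ := ∑ i, a i ^ α * b i ^ β with hC_def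
  have hA : 0 < A := Finset.sum_pos (fun k _ => ha k) ⟨⟨0, by omega⟩, mem_univ _⟩
  have hC : 0 < C := Finset.sum_pos
    (fun k _ => mul_pos (rpow_pos_of_pos (ha k) _) (rpow_pos_of_pos (hb k) _))
    ⟨⟨0, by omega⟩, mem_univ _⟩
  have pkey : ∀ (k : Fin K) (lam : ℝ), 0 < lam →
      p k lam = a k ^ α * b k ^ β * lam ^ (-β) - a k := by
    intro k lam hlam
    have h1 : (b k / lam) ^ β = b k ^ β / lam ^ β := Real.div_rpow (hb k).le hlam.le β
    have h2 : lam ^ (-β) = (lam ^ β)⁻¹ := Real.rpow_neg hlam.le β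
    simp only [p, h1, h2]
    ring
  have key : ∀ lam : ℝ, 0 < lam → S lam = C * lam ^ (-β) - A := by
    intro lam hlam
    rw [show S lam = ∑ k, (a k ^ α * b k ^ β * lam ^ (-β) - a k) from
      Finset.sum_congr rfl fun k _ => pkey k lam hlam]
    rw [Finset.sum_sub_distrib, ← Finset.sum_mul, ← hA_def, ← hC_def]
  have hanti : StrictAntiOn S (Set.Ioi 0) := by
    intro x hx y hy hxy
    rw [key x hx, key y hy]
    have : y ^ (-β) < x ^ (-β) :=
      Real.rpow_lt_rpow_of_neg hx hxy (by linarith)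
    nlinarith
  have hcont : ContinuousOn S (Set.Ioi 0) := by
    apply ContinuousOn.congr (f := fun lam => C * lam ^ (-β) - A)
    · apply ContinuousOn.sub _ continuousOn_const
      apply ContinuousOn.mul continuousOn_const
      intro x hx
      exact (Real.continuousAt_rpow_const x (-β) (Or.inl (ne_of_gt hx))).continuousWithinAt
    · intro x hx
      exact key x hx
  have himg : S '' Set.Ioi 0 = Set.Ioi (-A) := by
    ext y
    constructor
    · rintro ⟨x, hx, rfl⟩
      rw [Set.mem_Ioi] at hx ⊢
      rw [key x hx]
      have : 0 < C * x ^ (-β) := mul_pos hC (rpow_pos_of_pos hx _)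
      linarith
    · intro hy
      rw [Set.mem_Ioi] at hy
      have hyA : 0 < y + A := by linarith
      have hbase : (0:ℝ) < C / (y + A) := div_pos hC hyA
      refine ⟨(C / (y + A)) ^ (1 / β), rpow_pos_of_pos hbase _, ?_⟩
      rw [key _ (rpow_pos_of_pos hbase _), ← Real.rpow_mul hbase.le]
      have h4 : (1 / β) * (-β) = -1 := by field_simp
      rw [h4, Real.rpow_neg_one, inv_div]
      field_simp
      ring
  refine ⟨hanti, hcont, himg, ?_⟩
  intro Pmax hP
  have hlamβ : ∀ lam : ℝ, 0 < lam → S lam = Pmax → lam ^ (-β) = (Pmax + A) / C := by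
    intro lam hlam hS
    rw [key lam hlam] at hS
    field_simp
    linarith
  constructor
  · have hmem : Pmax ∈ Set.Ioi (-A) := by simp only [Set.mem_Ioi]; linarith
    rw [← himg] at hmem
    obtain ⟨lam, hlam, hSlam⟩ := hmem
    refine ⟨lam, ⟨hlam, hSlam⟩, ?_⟩
    rintro lam' ⟨hlam', hSlam'⟩
    exact hanti.injOn hlam' hlam (hSlam'.trans hSlam.symm)
  · intro lam hlam hS
    have hβval := hlamβ lam hlam hS
    constructor
    · rw [one_div, Real.inv_rpow hlam.le, ← Real.rpow_neg hlam.le]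
      exact hβval
    · intro k
      rw [pkey k lam hlam, hβval]
      ring
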